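/- Fix natural numbers N ≥ 1 and 1 ≤ s ≤ N, and μ > 0. Then the limit as λ_e → ∞ of E[W_s](λ_e) equals Σ_{j=0}^{s-1} 1/(μ(1 - j/N)), where E[W_s](λ_e) = Σ_{j=0}^{s-1} (N choose j) Σ_{k=0}^{j} (j choose k)(-1)^{j-k} Σ_{v=0}^{N-k} (N-k choose v) ω^v (1-ω)^{N-k-v} / (λ_e(N-k-v) + (μ/N)v), with ω = ω(λ_e) = 1 - ν₀(λ_e)·(μ/N)/((μ/N) - λ_e) and ν₀(λ_e) = (λ_e N/μ - 1)/((λ_e N/μ)^{B+1} - 1) for a fixed natural number B ≥ 1. -/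

import Mathlib

open Filter Finset

private lemma keyIdentity : ∀ (j : ℕ) (x : ℝ), (∀ i ∈ Finset.range (j+1), x - (i:ℝ) ≠ 0) →
    ∑ k ∈ Finset.range (j+1), (j.choose k : ℝ) * (-1:ℝ)^(j-k) / (x - k)
      = (Nat.factorial j : ℝ) / ∏ i ∈ Finset.range (j+1), (x - (i:ℝ)) := by
  intro j
  induction j with
  | zero => intro x hx; simp
  | succ j ih =>
    intro x hx
    have hx0 : x ≠ 0 := by
      have := hx 0 (by simp); simpa using this
    have hxj : x - ((j:ℝ)+1) ≠ 0 := by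
      have := hx (j+1) (by simp); push_cast at this; exact this
    have hx' : ∀ i ∈ Finset.range (j+1), (x-1) - (i:ℝ) ≠ 0 := by
      intro i hi
      have := hx (i+1) (by simp at hi ⊢; omega)
      push_cast at this ⊢
      intro h; apply this; linarith
    have hx'' : ∀ i ∈ Finset.range (j+1), x - (i:ℝ) ≠ 0 := by
      intro i hi; exact hx i (by simp at hi ⊢; omega)
    set F : ℕ → ℝ := fun k => (j.choose k : ℝ) * (-1:ℝ)^(j-k) / (x - (k:ℝ)) with hF
    set G : ℕ → ℝ := fun k => (j.choose k : ℝ) * (-1:ℝ)^(j-k) / ((x-1) - (k:ℝ)) with hG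
    have h1 : ∑ k ∈ Finset.range (j+2), ((j+1).choose k : ℝ) * (-1:ℝ)^(j+1-k) / (x - (k:ℝ))
        = (∑ k ∈ Finset.range (j+1), G k) - ∑ k ∈ Finset.range (j+1), F k := by
      rw [Finset.sum_range_succ' (fun k => ((j+1).choose k : ℝ) * (-1:ℝ)^(j+1-k) / (x - (k:ℝ))) (j+1)]
      have step : ∀ k ∈ Finset.range (j+1),
          ((j+1).choose (k+1) : ℝ) * (-1:ℝ)^(j+1-(k+1)) / (x - ((k+1:ℕ):ℝ))
          = G k - F (k+1) := by
        intro k hk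
        simp only [Finset.mem_range] at hk
        have he : j + 1 - (k+1) = j - k := by omega
        rw [he, Nat.choose_succ_succ]
        simp only [hG, hF]
        push_cast
        have hd : x - ((k:ℝ)+1) = (x-1) - k := by ring
        rw [hd]
        rcases Nat.lt_or_ge k j with h | h
        · have h2 : j - k = (j - (k+1)) + 1 := by omega
          rw [h2, pow_succ]
          ring
        · have hz : j.choose (k+1) = 0 := Nat.choose_eq_zero_of_lt (by omega)
          have h2 : j - k = 0 := by omega
          rw [hz, h2]
          simp
      rw [Finset.sum_congr rfl step, Finset.sum_sub_distrib]
      have e1 : ∑ k ∈ Finset.range (j+1), F (k+1) = (∑ k ∈ Finset.range (j+2), F k) - F 0 := by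
        rw [Finset.sum_range_succ' F (j+1)]; ring
      have e2 : ∑ k ∈ Finset.range (j+2), F k = ∑ k ∈ Finset.range (j+1), F k := by
        rw [Finset.sum_range_succ]
        have : F (j+1) = 0 := by
          simp [hF, Nat.choose_eq_zero_of_lt (Nat.lt_succ_self j)]
        rw [this, add_zero]
      have e3 : ((j+1).choose 0 : ℝ) * (-1:ℝ)^(j+1-0) / (x - ((0:ℕ):ℝ)) = - F 0 := by
        simp only [hF, Nat.choose_zero_right, Nat.sub_zero, Nat.cast_zero, Nat.cast_one, pow_succ]
        ring
      rw [e1, e2, e3]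
      ring
    rw [show j+1+1 = j+2 from rfl] at *
    rw [h1, ih (x-1) hx', ih x hx'']
    set P1 : ℝ := ∏ i ∈ Finset.range (j+1), ((x-1) - (i:ℝ)) with hP1def
    set P2 : ℝ := ∏ i ∈ Finset.range (j+1), (x - (i:ℝ)) with hP2def
    have hP1 : P1 ≠ 0 := Finset.prod_ne_zero_iff.mpr hx'
    have hP2 : P2 ≠ 0 := Finset.prod_ne_zero_iff.mpr hx''
    set Q : ℝ := ∏ i ∈ Finset.range (j+2), (x - (i:ℝ)) with hQdef
    have hQ : Q ≠ 0 := by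
      apply Finset.prod_ne_zero_iff.mpr
      intro i hi
      exact hx i (by simp at hi ⊢; omega)
    have hQ2 : Q = P2 * (x - ((j:ℝ)+1)) := by
      rw [hQdef, Finset.prod_range_succ, ← hP2def]
      push_cast
      ring
    have hQ1 : Q = x * P1 := by
      rw [hQdef, Finset.prod_range_succ' (fun i => x - (i:ℝ)) (j+1)]
      have : ∀ i ∈ Finset.range (j+1), x - ((i+1:ℕ):ℝ) = (x-1) - (i:ℝ) := by
        intro i hi; push_cast; ring
      rw [Finset.prod_congr rfl this, ← hP1def]
      push_cast
      ring
    have hrel : x * P1 = P2 * (x - ((j:ℝ)+1)) := by rw [← hQ1, hQ2]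
    rw [div_sub_div _ _ hP1 hP2, div_eq_div_iff (mul_ne_zero hP1 hP2) hQ]
    rw [Nat.factorial_succ]
    push_cast
    linear_combination ((j.factorial:ℝ) * (P2 - P1)) * hQ2 - ((j.factorial:ℝ) * P2) * hrel


private lemma prodDesc (N : ℕ) : ∀ m, m ≤ N →
    ∏ i ∈ Finset.range m, ((N:ℝ) - (i:ℝ)) = (N.descFactorial m : ℝ) := by
  intro m
  induction m with
  | zero => intro _; simp
  | succ m ih =>
    intro hm
    rw [Finset.prod_range_succ, ih (by omega), Nat.descFactorial_succ]
    rw [Nat.cast_mul, Nat.cast_sub (by omega : m ≤ N)]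
    ring

private noncomputable def omf (N B : ℕ) (mu : ℝ) (lam : ℝ) : ℝ :=
  1 - ((lam * N / mu - 1) / ((lam * N / mu) ^ (B + 1) - 1)) * (mu / N) / (mu / N - lam)

private lemma omf_tendsto (N B : ℕ) (hN : 1 ≤ N) (hB : 1 ≤ B) (mu : ℝ) (hmu : 0 < mu) :
    Tendsto (omf N B mu) atTop (nhds 1) := by
  have hN0 : (0:ℝ) < (N:ℝ) := by exact_mod_cast hN
  have hb : Tendsto (fun x : ℝ => (x - 1) / (x ^ (B+1) - 1)) atTop (nhds 0) := by
    have hnum : Tendsto (fun x : ℝ => (x⁻¹)^B - (x⁻¹)^(B+1)) atTop (nhds 0) := by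
      have h := ((tendsto_inv_atTop_zero (𝕜 := ℝ)).pow B).sub ((tendsto_inv_atTop_zero (𝕜 := ℝ)).pow (B+1))
      have hB0 : B ≠ 0 := by omega
      simpa [zero_pow hB0] using h
    have hden : Tendsto (fun x : ℝ => 1 - (x⁻¹)^(B+1)) atTop (nhds 1) := by
      have h := (tendsto_const_nhds (α := ℝ) (x := (1:ℝ))).sub ((tendsto_inv_atTop_zero (𝕜 := ℝ)).pow (B+1))
      simpa using h
    have h1 := hnum.div hden one_ne_zero
    rw [zero_div] at h1
    apply h1.congr'
    filter_upwards [eventually_gt_atTop (1:ℝ)] with x hx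
    have hx0 : x ≠ 0 := by linarith
    have hxp : x ^ (B+1) - 1 ≠ 0 := by
      have : 1 < x ^ (B+1) := one_lt_pow₀ hx (by omega)
      linarith
    rw [Pi.div_apply]
    simp only [inv_pow]
    field_simp
    ring
  have hcomp : Tendsto (fun lam : ℝ => lam * N / mu) atTop atTop :=
    (tendsto_id.atTop_mul_const hN0).atTop_div_const hmu
  have hnu : Tendsto (fun lam : ℝ => (lam * N / mu - 1) / ((lam * N / mu) ^ (B+1) - 1))
      atTop (nhds 0) := hb.comp hcomp
  have hinv : Tendsto (fun lam : ℝ => (mu / N - lam)⁻¹) atTop (nhds 0) := by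
    have h1 : Tendsto (fun lam : ℝ => lam - mu / N) atTop atTop := by
      simpa [sub_eq_add_neg] using tendsto_atTop_add_const_right atTop (-(mu/N)) (tendsto_id (α := ℝ))
    have h2 := h1.inv_tendsto_atTop.neg
    rw [neg_zero] at h2
    apply h2.congr
    intro lam
    simp only [Pi.inv_apply]
    rw [← inv_neg, neg_sub]
  have hq : Tendsto (fun lam : ℝ =>
      ((lam * N / mu - 1) / ((lam * N / mu) ^ (B+1) - 1)) * (mu / N) / (mu / N - lam))
      atTop (nhds 0) := by
    have h := (hnu.mul_const (mu/N)).mul hinv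
    rw [mul_zero] at h
    exact h.congr fun lam => by simp [div_eq_mul_inv]
  have h := (tendsto_const_nhds (α := ℝ) (x := (1:ℝ))).sub hq
  rw [sub_zero] at h
  exact h

theorem stmt8 (N s B : ℕ) (hN : 1 ≤ N) (hs1 : 1 ≤ s) (hsN : s ≤ N) (hB : 1 ≤ B)
    (mu : ℝ) (hmu : 0 < mu) :
    Filter.Tendsto
      (fun lam : ℝ =>
        ∑ j ∈ Finset.range s, (N.choose j : ℝ) *
          ∑ k ∈ Finset.range (j + 1), (j.choose k : ℝ) * (-1 : ℝ) ^ (j - k) *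
            ∑ v ∈ Finset.range (N - k + 1),
              ((N - k).choose v : ℝ) *
                (1 - ((lam * N / mu - 1) / ((lam * N / mu) ^ (B + 1) - 1)) *
                    (mu / N) / (mu / N - lam)) ^ v *
                (1 - (1 - ((lam * N / mu - 1) / ((lam * N / mu) ^ (B + 1) - 1)) *
                    (mu / N) / (mu / N - lam))) ^ (N - k - v) /
                (lam * (((N : ℝ) - k) - v) + (mu / N) * v))
      Filter.atTop
      (nhds (∑ j ∈ Finset.range s, 1 / (mu * (1 - (j : ℝ) / N)))) := by
  have hN0 : (0:ℝ) < (N:ℝ) := by exact_mod_cast hN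
  have hOm := omf_tendsto N B hN hB mu hmu
  have hgoal : (fun lam : ℝ =>
        ∑ j ∈ Finset.range s, (N.choose j : ℝ) *
          ∑ k ∈ Finset.range (j + 1), (j.choose k : ℝ) * (-1 : ℝ) ^ (j - k) *
            ∑ v ∈ Finset.range (N - k + 1),
              ((N - k).choose v : ℝ) *
                (1 - ((lam * N / mu - 1) / ((lam * N / mu) ^ (B + 1) - 1)) *
                    (mu / N) / (mu / N - lam)) ^ v *
                (1 - (1 - ((lam * N / mu - 1) / ((lam * N / mu) ^ (B + 1) - 1)) *
                    (mu / N) / (mu / N - lam))) ^ (N - k - v) /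
                (lam * (((N : ℝ) - k) - v) + (mu / N) * v))
      = (fun lam : ℝ =>
        ∑ j ∈ Finset.range s, (N.choose j : ℝ) *
          ∑ k ∈ Finset.range (j + 1), (j.choose k : ℝ) * (-1 : ℝ) ^ (j - k) *
            ∑ v ∈ Finset.range (N - k + 1),
              ((N - k).choose v : ℝ) * (omf N B mu lam) ^ v *
                (1 - omf N B mu lam) ^ (N - k - v) /
                (lam * (((N : ℝ) - k) - v) + (mu / N) * v)) := rfl
  rw [hgoal]
  -- per-(k,v) limit
  have Hv : ∀ k : ℕ, k < N → ∀ v ∈ Finset.range (N - k + 1),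
      Tendsto (fun lam : ℝ => ((N - k).choose v : ℝ) * (omf N B mu lam) ^ v *
                (1 - omf N B mu lam) ^ (N - k - v) /
                (lam * (((N : ℝ) - k) - v) + (mu / N) * v)) atTop
        (nhds (if v = N - k then 1 / ((mu/N) * ((N:ℝ) - k)) else 0)) := by
    intro k hkN v hv
    simp only [Finset.mem_range] at hv
    have hkR : (k:ℝ) < (N:ℝ) := by exact_mod_cast hkN
    have hnum : Tendsto (fun lam : ℝ => ((N - k).choose v : ℝ) * (omf N B mu lam) ^ v *
          (1 - omf N B mu lam) ^ (N - k - v)) atTop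
        (nhds (((N - k).choose v : ℝ) * 1 ^ v * (1 - 1) ^ (N - k - v))) :=
      (tendsto_const_nhds.mul (hOm.pow v)).mul ((tendsto_const_nhds.sub hOm).pow (N - k - v))
    by_cases hcase : v = N - k
    · rw [if_pos hcase]
      have he : N - k - v = 0 := by omega
      have hvR : (v:ℝ) = (N:ℝ) - (k:ℝ) := by
        rw [hcase, Nat.cast_sub (by omega : k ≤ N)]
      have hD : (fun lam : ℝ => lam * (((N:ℝ) - k) - v) + (mu/N)*v)
          = fun _ : ℝ => (mu/N) * ((N:ℝ) - k) := by
        funext lam; rw [hvR]; ring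
      have hDen : Tendsto (fun lam : ℝ => lam * (((N:ℝ) - k) - v) + (mu/N)*v) atTop
          (nhds ((mu/N) * ((N:ℝ) - k))) := by
        rw [hD]; exact tendsto_const_nhds
      have hne : (mu/N) * ((N:ℝ) - k) ≠ 0 := by
        have h1 : 0 < mu / N := div_pos hmu hN0
        have h2 : 0 < (N:ℝ) - k := by linarith
        positivity
      have h := hnum.div hDen hne
      have hval : (((N - k).choose v : ℝ) * 1 ^ v * (1 - 1) ^ (N - k - v)) / ((mu/N) * ((N:ℝ) - k))
          = 1 / ((mu/N) * ((N:ℝ) - k)) := by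
        rw [he, hcase]
        simp
      rwa [hval] at h
    · rw [if_neg hcase]
      have he : 1 ≤ N - k - v := by omega
      have hc : 0 < ((N:ℝ) - k) - v := by
        have : (v:ℝ) < (N:ℝ) - (k:ℝ) := by
          have h1 : v < N - k := by omega
          have h2 : (v:ℝ) < ((N - k : ℕ) : ℝ) := by exact_mod_cast h1
          rwa [Nat.cast_sub (by omega : k ≤ N)] at h2
        linarith
      have hD : Tendsto (fun lam : ℝ => lam * (((N:ℝ) - k) - v) + (mu/N)*v) atTop atTop :=
        tendsto_atTop_add_const_right atTop _ (tendsto_id.atTop_mul_const hc)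
      have h := hnum.mul hD.inv_tendsto_atTop
      have hval : (((N - k).choose v : ℝ) * 1 ^ v * (1 - 1) ^ (N - k - v)) * 0 = 0 := by ring
      rw [hval] at h
      exact h.congr fun lam => by simp [div_eq_mul_inv]
  -- per-k limit of the v-sum
  have Hk : ∀ k : ℕ, k < N →
      Tendsto (fun lam : ℝ => ∑ v ∈ Finset.range (N - k + 1),
          ((N - k).choose v : ℝ) * (omf N B mu lam) ^ v *
            (1 - omf N B mu lam) ^ (N - k - v) /
            (lam * (((N : ℝ) - k) - v) + (mu / N) * v)) atTop
        (nhds (1 / ((mu/N) * ((N:ℝ) - k)))) := by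
    intro k hkN
    have h := tendsto_finset_sum (Finset.range (N - k + 1)) (Hv k hkN)
    have hval : ∑ v ∈ Finset.range (N - k + 1),
        (if v = N - k then 1 / ((mu/N) * ((N:ℝ) - k)) else 0) = 1 / ((mu/N) * ((N:ℝ) - k)) := by
      rw [Finset.sum_ite_eq' (Finset.range (N - k + 1)) (N - k)
        (fun _ => 1 / ((mu/N) * ((N:ℝ) - k)))]
      rw [if_pos (Finset.mem_range.mpr (by omega))]
    rwa [hval] at h
  -- per-j
  have Hj : ∀ j ∈ Finset.range s,
      Tendsto (fun lam : ℝ => (N.choose j : ℝ) *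
          ∑ k ∈ Finset.range (j + 1), (j.choose k : ℝ) * (-1 : ℝ) ^ (j - k) *
            ∑ v ∈ Finset.range (N - k + 1),
              ((N - k).choose v : ℝ) * (omf N B mu lam) ^ v *
                (1 - omf N B mu lam) ^ (N - k - v) /
                (lam * (((N : ℝ) - k) - v) + (mu / N) * v)) atTop
        (nhds ((N.choose j : ℝ) * ∑ k ∈ Finset.range (j + 1),
            (j.choose k : ℝ) * (-1 : ℝ) ^ (j - k) * (1 / ((mu/N) * ((N:ℝ) - k))))) := by
    intro j hj
    simp only [Finset.mem_range] at hj
    apply Tendsto.const_mul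
    apply tendsto_finset_sum
    intro k hk
    simp only [Finset.mem_range] at hk
    exact Tendsto.const_mul _ (Hk k (by omega))
  have main := tendsto_finset_sum (Finset.range s) Hj
  -- algebraic identification of the limit value
  have hvaleq : ∀ j ∈ Finset.range s,
      (N.choose j : ℝ) * ∑ k ∈ Finset.range (j + 1),
          (j.choose k : ℝ) * (-1 : ℝ) ^ (j - k) * (1 / ((mu/N) * ((N:ℝ) - k)))
        = 1 / (mu * (1 - (j : ℝ) / N)) := by
    intro j hj
    simp only [Finset.mem_range] at hj
    have hjN : j < N := by omega
    have hxne : ∀ i ∈ Finset.range (j+1), (N:ℝ) - (i:ℝ) ≠ 0 := by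
      intro i hi
      simp only [Finset.mem_range] at hi
      have : (i:ℝ) < (N:ℝ) := by exact_mod_cast (by omega : i < N)
      linarith
    have hterm : ∀ k ∈ Finset.range (j+1),
        (j.choose k : ℝ) * (-1 : ℝ) ^ (j - k) * (1 / ((mu/N) * ((N:ℝ) - k)))
          = ((N:ℝ)/mu) * ((j.choose k : ℝ) * (-1 : ℝ) ^ (j - k) / ((N:ℝ) - k)) := by
      intro k hk
      have hk' : ((N:ℝ) - k) ≠ 0 := hxne k hk
      field_simp
    rw [Finset.sum_congr rfl hterm, ← Finset.mul_sum, keyIdentity j (N:ℝ) hxne,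
      prodDesc N (j+1) (by omega)]
    have hdesc : (N.descFactorial (j+1) : ℝ)
        = ((N:ℝ) - j) * (Nat.factorial j : ℝ) * (N.choose j : ℝ) := by
      rw [Nat.descFactorial_succ, Nat.descFactorial_eq_factorial_mul_choose]
      rw [Nat.cast_mul, Nat.cast_mul, Nat.cast_sub (by omega : j ≤ N)]
      ring
    rw [hdesc]
    have h1 : (0:ℝ) < (N:ℝ) - j := by
      have : (j:ℝ) < (N:ℝ) := by exact_mod_cast hjN
      linarith
    have h2 : (N.choose j : ℝ) ≠ 0 := by
      have := Nat.choose_pos (by omega : j ≤ N)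
      positivity
    have h3 : (Nat.factorial j : ℝ) ≠ 0 := by positivity
    have h4 : 1 - (j:ℝ)/N ≠ 0 := by
      have : (j:ℝ)/N < 1 := (div_lt_one hN0).mpr (by exact_mod_cast hjN)
      linarith
    field_simp
  rw [Finset.sum_congr rfl hvaleq] at main
  exact main
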